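/- The map p : (ℙ¹)³ → ℙ⁵ given by (y₁ : y₂ : y₃) ↦ (y₁ : y₂ : y₃ : y₁y₂ : y₁y₃ : y₂y₃) (in suitable bi-homogeneous coordinates with base points at (0,0,0) and (∞,∞,∞)) is birational onto the quartic threefold in ℙ⁵ defined by x₀x₅ = x₁x₄ = x₂x₃. -/

import Mathlib

/-- the cone over the quartic threefold `x₀x₅ = x₁x₄ = x₂x₃` in `ℙ⁵` -/
def quarticCone : Set (Fin 6 → ℂ) :=
  {x | x 0 * x 5 = x 1 * x 4 ∧ x 1 * x 4 = x 2 * x 3}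

/-- the map `(y₁,y₂,y₃) ↦ (y₁ : y₂ : y₃ : y₁y₂ : y₁y₃ : y₂y₃)` in an affine chart of `(ℙ¹)³` -/
def quarticMap (y : Fin 3 → ℂ) : Fin 6 → ℂ :=
  ![y 0, y 1, y 2, y 0 * y 1, y 0 * y 2, y 1 * y 2]

/-- The map `p : (ℙ¹)³ → ℙ⁵`, `(y₁:y₂:y₃) ↦ (y₁:y₂:y₃:y₁y₂:y₁y₃:y₂y₃)`
(with base points at `(0,0,0)` and `(∞,∞,∞)`) is birational onto the quartic threefold
`x₀x₅ = x₁x₄ = x₂x₃`: its image satisfies the equations, it is injective up to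
projective scaling on the dense open set where all coordinates are nonzero, and every
point of the quartic with nonzero coordinates is (projectively) in the image — giving a
rational inverse from the image. -/
theorem stmt_10 :
    (∀ y : Fin 3 → ℂ, quarticMap y ∈ quarticCone) ∧
    (∀ y y' : Fin 3 → ℂ, (∀ i, y i ≠ 0) → (∀ i, y' i ≠ 0) →
      ∀ c : ℂ, c ≠ 0 → quarticMap y = c • quarticMap y' → y = y') ∧
    (∀ x ∈ quarticCone, (∀ i, x i ≠ 0) →
      ∃ (y : Fin 3 → ℂ) (c : ℂ), c ≠ 0 ∧ quarticMap y = c • x) := by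
  refine ⟨?_, ?_, ?_⟩
  · intro y
    exact ⟨(by ring : y 0 * (y 1 * y 2) = y 1 * (y 0 * y 2)),
           (by ring : y 1 * (y 0 * y 2) = y 2 * (y 0 * y 1))⟩
  · intro y y' hy hy' c hc h
    have h0 : y 0 = c * y' 0 := congrFun h 0
    have h1 : y 1 = c * y' 1 := congrFun h 1
    have h2 : y 2 = c * y' 2 := congrFun h 2
    have h3 : y 0 * y 1 = c * (y' 0 * y' 1) := congrFun h 3
    rw [h0, h1] at h3
    have hcc : c * (c - 1) = 0 := by
      have hne := mul_ne_zero (hy' 0) (hy' 1)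
      have : (c * c - c) * (y' 0 * y' 1) = 0 := by linear_combination h3
      rcases mul_eq_zero.mp this with h | h
      · linear_combination h
      · exact absurd h hne
    have hc1 : c = 1 := by
      rcases mul_eq_zero.mp hcc with h | h
      · exact absurd h hc
      · linear_combination h
    subst hc1
    simp only [one_mul] at h0 h1 h2
    funext i
    fin_cases i
    · exact h0
    · exact h1
    · exact h2
  · intro x hx hnz
    obtain ⟨e1, e2⟩ := hx
    have h0 := hnz 0; have h1 := hnz 1; have h2 := hnz 2
    have h3 := hnz 3; have h4 := hnz 4; have h5 := hnz 5
    set c : ℂ := x 3 / (x 0 * x 1) with hcdef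
    have hc : c ≠ 0 := div_ne_zero h3 (mul_ne_zero h0 h1)
    refine ⟨![c * x 0, c * x 1, c * x 2], c, hc, ?_⟩
    funext i
    fin_cases i
    · show c * x 0 = c * x 0; rfl
    · show c * x 1 = c * x 1; rfl
    · show c * x 2 = c * x 2; rfl
    · show (c * x 0) * (c * x 1) = c * x 3
      rw [hcdef]; field_simp
    · show (c * x 0) * (c * x 2) = c * x 4
      rw [hcdef]; field_simp
      linear_combination (-1 : ℂ) * e2
    · show (c * x 1) * (c * x 2) = c * x 5
      rw [hcdef]; field_simp
      linear_combination (-1 : ℂ) * e1 + (-1 : ℂ) * e2
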